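/- Let 0 → X → Y → Z → 0 be a short exact sequence of modules over a ring R. Then Y is pseudo-null if and only if both X and Z are pseudo-null. -/

import Mathlib

universe u

/-- An `R`-module `M` is *pseudo-null* if `E^0(N) = E^1(N) = 0` for every submodule `N`
of `M`, where `E^j(N) = Ext_R^j(N, R)`.  Here `E^0(N) = Hom_R(N, R) = 0` is stated
directly, and `E^1(N) = 0` is stated through its standard characterisation: every
short exact sequence `0 → R → E → N → 0` splits. -/
def IsPseudoNull (R : Type u) [Ring R] (M : Type u) [AddCommGroup M] [Module R M] : Prop :=
  ∀ N : Submodule R M,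
    (∀ φ : N →ₗ[R] R, φ = 0) ∧
    (∀ (E : Type u) [AddCommGroup E] [Module R E] (i : R →ₗ[R] E) (π : E →ₗ[R] N),
      Function.Injective i → Function.Surjective π →
      LinearMap.range i = LinearMap.ker π →
      ∃ σ : N →ₗ[R] E, π.comp σ = LinearMap.id)

/-- Let `0 → X → Y → Z → 0` be a short exact sequence of modules over a
ring `R`.  Then `Y` is pseudo-null if and only if both `X` and `Z` are pseudo-null. -/

def PN (R : Type u) [Ring R] (M : Type u) [AddCommGroup M] [Module R M] : Prop :=
  (∀ φ : M →ₗ[R] R, φ = 0) ∧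
  (∀ (E : Type u) [AddCommGroup E] [Module R E] (i : R →ₗ[R] E) (π : E →ₗ[R] M),
    Function.Injective i → Function.Surjective π →
    LinearMap.range i = LinearMap.ker π →
    ∃ σ : M →ₗ[R] E, π.comp σ = LinearMap.id)


theorem isPseudoNull_iff_pn {R M : Type u} [Ring R] [AddCommGroup M] [Module R M] :
    IsPseudoNull R M ↔ ∀ N : Submodule R M, PN R N := Iff.rfl

theorem PN.of_equiv {R M M' : Type u} [Ring R] [AddCommGroup M] [Module R M]
    [AddCommGroup M'] [Module R M'] (e : M ≃ₗ[R] M') (h : PN R M) : PN R M' := by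
  obtain ⟨h0, h1⟩ := h
  constructor
  · intro φ
    have := h0 (φ.comp (e : M →ₗ[R] M'))
    ext x
    have := congrArg (fun ψ => ψ (e.symm x)) this
    simpa using this
  · intro E _ _ i π hi hπ hr
    obtain ⟨σ, hσ⟩ := h1 E i ((e.symm : M' →ₗ[R] M).comp π) hi
      (e.symm.surjective.comp hπ)
      (by rw [hr, LinearMap.ker_comp, LinearEquiv.ker, Submodule.comap_bot])
    refine ⟨σ.comp (e.symm : M' →ₗ[R] M), ?_⟩
    ext x
    have h1 := congrArg (fun ψ => ψ (e.symm x)) hσ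
    simp only [LinearMap.comp_apply, LinearMap.id_apply] at h1 ⊢
    have : π (σ (e.symm x)) = e (e.symm x) := by
      apply e.symm.injective; simpa using h1
    simpa using this

theorem IsPseudoNull.of_injective {R M M' : Type u} [Ring R] [AddCommGroup M] [Module R M]
    [AddCommGroup M'] [Module R M'] (j : M' →ₗ[R] M) (hj : Function.Injective j)
    (h : IsPseudoNull R M) : IsPseudoNull R M' := fun N =>
  PN.of_equiv (Submodule.equivMapOfInjective j hj N).symm
    ((isPseudoNull_iff_pn.mp h) (N.map j))

theorem IsPseudoNull.pn {R M : Type u} [Ring R] [AddCommGroup M] [Module R M]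
    (h : IsPseudoNull R M) : PN R M :=
  PN.of_equiv (Submodule.topEquiv) ((isPseudoNull_iff_pn.mp h) ⊤)

theorem IsPseudoNull.of_surjective {R M M'' : Type u} [Ring R] [AddCommGroup M] [Module R M]
    [AddCommGroup M''] [Module R M''] (g : M →ₗ[R] M'') (hg : Function.Surjective g)
    (h : IsPseudoNull R M) : IsPseudoNull R M'' := by
  intro N
  set N' : Submodule R M := N.comap g with hN'def
  have hN' : IsPseudoNull R N' := h.of_injective N'.subtype Subtype.val_injective
  let gN : N' →ₗ[R] N := LinearMap.codRestrict N (g.comp N'.subtype) (fun x => x.2)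
  have hgN : Function.Surjective gN := by
    intro n
    obtain ⟨m, hm⟩ := hg n
    exact ⟨⟨m, by simp [hN'def, Submodule.mem_comap, hm]⟩, by
      apply Subtype.ext; exact hm⟩
  constructor
  · intro φ
    have h0 := (h N').1 (φ.comp gN)
    ext n
    obtain ⟨m, rfl⟩ := hgN n
    have := congrArg (fun ψ => ψ m) h0
    simpa using this
  · intro E _ _ i π hi hπ hr
    -- pullback
    let F : E × N' →ₗ[R] N := π.comp (LinearMap.fst R E N') - gN.comp (LinearMap.snd R E N')
    set E' : Submodule R (E × N') := LinearMap.ker F with hE'def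
    have hmem : ∀ p : E × N', p ∈ E' ↔ π p.1 = gN p.2 := by
      intro p
      simp [hE'def, F, sub_eq_zero]
    let i' : R →ₗ[R] E' := LinearMap.codRestrict E' (i.prod 0)
      (fun r => by
        rw [hmem]
        have : i r ∈ LinearMap.ker π := hr ▸ LinearMap.mem_range_self i r
        simpa using this.symm ▸ (by simp [LinearMap.mem_ker.mp this]))
    let π' : E' →ₗ[R] N' := (LinearMap.snd R E N').comp E'.subtype
    have hi' : Function.Injective i' := by
      intro a b hab
      apply hi
      exact congrArg (fun x : E' => (x : E × N').1) hab
    have hπ' : Function.Surjective π' := by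
      intro y
      obtain ⟨e, he⟩ := hπ (gN y)
      exact ⟨⟨(e, y), (hmem _).mpr (by simpa using he)⟩, rfl⟩
    have hr' : LinearMap.range i' = LinearMap.ker π' := by
      ext p
      simp only [LinearMap.mem_range, LinearMap.mem_ker]
      constructor
      · rintro ⟨r, rfl⟩
        rfl
      · intro hp
        have hp2 : (p : E × N').2 = 0 := hp
        have hp1 : π (p : E × N').1 = 0 := by
          have := (hmem _).mp p.2
          rw [this, hp2, map_zero]
        have : (p : E × N').1 ∈ LinearMap.range i := hr.symm ▸ hp1
        obtain ⟨r, hrr⟩ := this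
        refine ⟨r, ?_⟩
        apply Subtype.ext
        exact Prod.ext hrr hp2.symm
    obtain ⟨σ', hσ'⟩ := (h N').2 E' i' π' hi' hπ' hr'
    let τ : N' →ₗ[R] E := (LinearMap.fst R E N').comp (E'.subtype.comp σ')
    have hτ : ∀ y : N', π (τ y) = gN y := by
      intro y
      have h1 := (hmem _).mp (σ' y).2
      have h2 : ((σ' y : E × N').2) = y := congrArg (fun ψ => ψ y) hσ'
      rw [show τ y = ((σ' y : E × N').1) from rfl, h1, h2]
    -- τ vanishes on ker gN
    set K : Submodule R N' := LinearMap.ker gN with hKdef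
    have hτK : ∀ k : N', k ∈ K → τ k = 0 := by
      intro k hk
      have hπτ : π (τ k) = 0 := by rw [hτ k, LinearMap.mem_ker.mp hk]
      have hrange : ∀ k : N', k ∈ K → τ k ∈ LinearMap.range i := by
        intro k hk
        rw [hr]
        exact LinearMap.mem_ker.mpr (by rw [hτ k, LinearMap.mem_ker.mp hk])
      let e2 : R ≃ₗ[R] LinearMap.range i := LinearEquiv.ofInjective i hi
      let ρ : K →ₗ[R] R := (e2.symm : LinearMap.range i →ₗ[R] R).comp
        (LinearMap.codRestrict (LinearMap.range i) (τ.comp K.subtype)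
          (fun x => hrange x x.2))
      have hρ : ρ = 0 := (hN' K).1 ρ
      have := congrArg (fun ψ => ψ (⟨k, hk⟩ : K)) hρ
      simp only [ρ, LinearMap.comp_apply, LinearMap.zero_apply] at this
      have h3 : (⟨τ k, hrange k hk⟩ : LinearMap.range i) = e2 0 := by
        rw [← this]; exact (e2.apply_symm_apply _).symm
      have h4 : τ k = i 0 := congrArg Subtype.val h3
      simpa using h4
    have hfiber : ∀ m₁ m₂ : N', gN m₁ = gN m₂ → τ m₁ = τ m₂ := by
      intro m₁ m₂ hm
      have : τ (m₁ - m₂) = 0 := hτK _ (by simp [hKdef, LinearMap.mem_ker, hm])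
      rw [map_sub, sub_eq_zero] at this
      exact this
    let σ : N →ₗ[R] E :=
      { toFun := fun n => τ (hgN n).choose
        map_add' := by
          intro a b
          have h1 := hfiber ((hgN (a+b)).choose) ((hgN a).choose + (hgN b).choose)
            (by rw [map_add, (hgN (a+b)).choose_spec, (hgN a).choose_spec,
              (hgN b).choose_spec])
          show τ (hgN (a+b)).choose = τ (hgN a).choose + τ (hgN b).choose
          rw [h1, map_add]
        map_smul' := by
          intro r a
          have := hfiber ((hgN (r • a)).choose) (r • (hgN a).choose)
            (by rw [map_smul, (hgN (r • a)).choose_spec, (hgN a).choose_spec])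
          show τ (hgN (r • a)).choose = (RingHom.id R) r • τ (hgN a).choose
          rw [this, map_smul]; rfl }
    refine ⟨σ, ?_⟩
    ext n
    have h5 : π (τ (hgN n).choose) = n := by rw [hτ, (hgN n).choose_spec]
    exact congrArg Subtype.val h5

theorem IsPseudoNull.of_extension {R X Y Z : Type u} [Ring R]
    [AddCommGroup X] [Module R X] [AddCommGroup Y] [Module R Y]
    [AddCommGroup Z] [Module R Z]
    (f : X →ₗ[R] Y) (g : Y →ₗ[R] Z)
    (hf : Function.Injective f) (hg : Function.Surjective g)
    (hfg : LinearMap.range f = LinearMap.ker g)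
    (hX : IsPseudoNull R X) (hZ : IsPseudoNull R Z) : IsPseudoNull R Y := by
  intro N
  let gN : N →ₗ[R] Z := g.comp N.subtype
  set Q : Submodule R Z := LinearMap.range gN with hQdef
  let p : N →ₗ[R] Q := gN.rangeRestrict
  have hp : Function.Surjective p := gN.surjective_rangeRestrict
  set K : Submodule R N := LinearMap.ker gN with hKdef
  have hkerp : ∀ n : N, p n = 0 ↔ n ∈ K := by
    intro n
    constructor
    · intro hn
      have : gN n = 0 := congrArg Subtype.val hn
      exact LinearMap.mem_ker.mpr this
    · intro hn
      exact Subtype.ext (LinearMap.mem_ker.mp hn)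
  -- K embeds into X
  have hKX : ∀ k : N, k ∈ K → (k : Y) ∈ LinearMap.range f := by
    intro k hk
    rw [hfg]
    exact LinearMap.mem_ker.mpr (LinearMap.mem_ker.mp hk)
  let eX : X ≃ₗ[R] LinearMap.range f := LinearEquiv.ofInjective f hf
  let jK : K →ₗ[R] X := (eX.symm : LinearMap.range f →ₗ[R] X).comp
    (LinearMap.codRestrict (LinearMap.range f) (N.subtype.comp K.subtype)
      (fun x => hKX x x.2))
  have hjK : Function.Injective jK := by
    intro a b hab
    apply Subtype.ext; apply Subtype.ext
    have := congrArg (fun x => ((eX x : LinearMap.range f) : Y)) hab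
    simp only [jK, LinearMap.comp_apply, LinearEquiv.coe_coe, LinearEquiv.apply_symm_apply] at this
    exact this
  have hK : IsPseudoNull R K := hX.of_injective jK hjK
  have hKpn : PN R K := hK.pn
  constructor
  · -- Hom(N, R) = 0
    intro φ
    have hφK : ∀ k : N, k ∈ K → φ k = 0 := by
      intro k hk
      have h0 := hKpn.1 (φ.comp K.subtype)
      have := congrArg (fun ψ => ψ (⟨k, hk⟩ : K)) h0
      simpa using this
    have hfiber : ∀ m₁ m₂ : N, p m₁ = p m₂ → φ m₁ = φ m₂ := by
      intro m₁ m₂ hm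
      have hker : m₁ - m₂ ∈ K := by
        rw [← hkerp]; rw [map_sub, sub_eq_zero]; exact hm
      have := hφK _ hker
      rw [map_sub, sub_eq_zero] at this
      exact this
    let φ' : Q →ₗ[R] R :=
      { toFun := fun x => φ (hp x).choose
        map_add' := by
          intro a b
          have h1 := hfiber ((hp (a+b)).choose) ((hp a).choose + (hp b).choose)
            (by rw [map_add, (hp (a+b)).choose_spec, (hp a).choose_spec, (hp b).choose_spec])
          show φ (hp (a+b)).choose = φ (hp a).choose + φ (hp b).choose
          rw [h1, map_add]
        map_smul' := by
          intro r a
          have h1 := hfiber ((hp (r • a)).choose) (r • (hp a).choose)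
            (by rw [map_smul, (hp (r • a)).choose_spec, (hp a).choose_spec])
          show φ (hp (r • a)).choose = (RingHom.id R) r • φ (hp a).choose
          rw [h1, map_smul]; rfl }
    have h0 : φ' = 0 := (hZ Q).1 φ'
    ext n
    have h2 : φ' (p n) = φ n := hfiber _ _ ((hp (p n)).choose_spec)
    rw [← h2, h0]; rfl
  · -- Ext part
    intro E _ _ i π hi hπ hr
    -- Step 1: split the restricted extension over K
    set E₀ : Submodule R E := Submodule.comap π K with hE₀def
    let i₀ : R →ₗ[R] E₀ := LinearMap.codRestrict E₀ i
      (fun r => by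
        have : i r ∈ LinearMap.ker π := hr ▸ LinearMap.mem_range_self i r
        simp [hE₀def, Submodule.mem_comap, LinearMap.mem_ker.mp this])
    let π₀ : E₀ →ₗ[R] K := LinearMap.codRestrict K (π.comp E₀.subtype) (fun x => x.2)
    have hi₀ : Function.Injective i₀ := by
      intro a b hab
      exact hi (congrArg Subtype.val hab)
    have hπ₀ : Function.Surjective π₀ := by
      intro k
      obtain ⟨e, he⟩ := hπ (k : N)
      refine ⟨⟨e, by simp [hE₀def, Submodule.mem_comap, he, k.2]⟩, ?_⟩
      exact Subtype.ext he
    have hr₀ : LinearMap.range i₀ = LinearMap.ker π₀ := by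
      ext x
      simp only [LinearMap.mem_range, LinearMap.mem_ker]
      constructor
      · rintro ⟨r, rfl⟩
        apply Subtype.ext
        show π (i r) = 0
        have : i r ∈ LinearMap.ker π := hr ▸ LinearMap.mem_range_self i r
        exact LinearMap.mem_ker.mp this
      · intro hx
        have : π (x : E) = 0 := congrArg Subtype.val hx
        have : (x : E) ∈ LinearMap.range i := hr.symm ▸ LinearMap.mem_ker.mpr this
        obtain ⟨r, hrr⟩ := this
        exact ⟨r, Subtype.ext hrr⟩
    obtain ⟨σ₀, hσ₀⟩ := hKpn.2 E₀ i₀ π₀ hi₀ hπ₀ hr₀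
    let j₀ : K →ₗ[R] E := E₀.subtype.comp σ₀
    have hj₀ : ∀ k : K, π (j₀ k) = (k : N) := by
      intro k
      have := congrArg (fun ψ => ψ k) hσ₀
      exact congrArg Subtype.val this
    -- Step 2: quotient extension over Q
    set S : Submodule R E := LinearMap.range j₀ with hSdef
    let q : E →ₗ[R] (E ⧸ S) := S.mkQ
    have hqS : ∀ k : K, q (j₀ k) = 0 := by
      intro k
      rw [Submodule.mkQ_apply, Submodule.Quotient.mk_eq_zero]
      exact LinearMap.mem_range_self j₀ k
    let ibar : R →ₗ[R] (E ⧸ S) := q.comp i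
    have hibar : Function.Injective ibar := by
      intro a b hab
      apply hi
      have h1 : q (i a - i b) = 0 := by rw [map_sub, sub_eq_zero]; exact hab
      rw [Submodule.mkQ_apply, Submodule.Quotient.mk_eq_zero] at h1
      obtain ⟨k, hk⟩ := h1
      have h2 : π (i a - i b) = 0 := by
        have : i a - i b ∈ LinearMap.ker π := by
          rw [← hr, ← map_sub]; exact LinearMap.mem_range_self i (a - b)
        exact LinearMap.mem_ker.mp this
      have h3 : (k : N) = 0 := by rw [← hj₀ k, hk, h2]
      have h4 : i a - i b = 0 := by rw [← hk, show k = 0 from Subtype.ext h3, map_zero]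
      rw [sub_eq_zero] at h4
      exact h4
    have hSker : S ≤ LinearMap.ker (p.comp π) := by
      rintro _ ⟨k, rfl⟩
      rw [LinearMap.mem_ker, LinearMap.comp_apply, hj₀ k]
      exact (hkerp _).mpr k.2
    let πbar : (E ⧸ S) →ₗ[R] Q := S.liftQ (p.comp π) hSker
    have hπbarq : ∀ e : E, πbar (q e) = p (π e) := fun e => rfl
    have hπbar : Function.Surjective πbar := by
      intro x
      obtain ⟨n, hn⟩ := hp x
      obtain ⟨e, he⟩ := hπ n
      exact ⟨q e, by rw [hπbarq, he, hn]⟩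
    have hrbar : LinearMap.range ibar = LinearMap.ker πbar := by
      ext x
      simp only [LinearMap.mem_range, LinearMap.mem_ker]
      constructor
      · rintro ⟨r, rfl⟩
        show πbar (q (i r)) = 0
        rw [hπbarq]
        have : i r ∈ LinearMap.ker π := hr ▸ LinearMap.mem_range_self i r
        rw [LinearMap.mem_ker.mp this, map_zero]
      · intro hx
        obtain ⟨e, rfl⟩ := S.mkQ_surjective x
        have h1 : p (π e) = 0 := by rw [← hπbarq]; exact hx
        have h2 : π e ∈ K := (hkerp _).mp h1
        set k : K := ⟨π e, h2⟩ with hkdef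
        have h3 : π (e - j₀ k) = 0 := by rw [map_sub, hj₀ k]; exact sub_self _
        have h4 : e - j₀ k ∈ LinearMap.range i := hr.symm ▸ LinearMap.mem_ker.mpr h3
        obtain ⟨r, hrr⟩ := h4
        refine ⟨r, ?_⟩
        show q (i r) = q e
        rw [hrr, map_sub, hqS, sub_zero]
    obtain ⟨s, hs⟩ := (hZ Q).2 (E ⧸ S) ibar πbar hibar hπbar hrbar
    have hsid : ∀ x : Q, πbar (s x) = x := by
      intro x
      exact congrArg (fun ψ => ψ x) hs
    -- Step 3: construct the section of π
    have hex : ∀ n : N, ∃ e : E, π e = n ∧ q e = s (p n) := by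
      intro n
      obtain ⟨e₁, he₁⟩ := S.mkQ_surjective (s (p n))
      have h1 : p (π e₁) = p n := by
        rw [← hπbarq]
        show πbar (q e₁) = p n
        rw [show q e₁ = s (p n) from he₁, hsid]
      have h2 : π e₁ - n ∈ K := by
        rw [← hkerp, map_sub, sub_eq_zero]; exact h1
      refine ⟨e₁ - j₀ ⟨π e₁ - n, h2⟩, ?_, ?_⟩
      · rw [map_sub, hj₀]; exact sub_sub_cancel _ _
      · rw [map_sub, hqS, sub_zero]; exact he₁
    have huniq : ∀ (n : N) (e₁ e₂ : E), (π e₁ = n ∧ q e₁ = s (p n)) →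
        (π e₂ = n ∧ q e₂ = s (p n)) → e₁ = e₂ := by
      intro n e₁ e₂ h₁ h₂
      have hq0 : q (e₁ - e₂) = 0 := by rw [map_sub, h₁.2, h₂.2, sub_self]
      rw [Submodule.mkQ_apply, Submodule.Quotient.mk_eq_zero] at hq0
      obtain ⟨k, hk⟩ := hq0
      have hπ0 : π (e₁ - e₂) = 0 := by rw [map_sub, h₁.1, h₂.1, sub_self]
      have h3 : (k : N) = 0 := by rw [← hj₀ k, hk, hπ0]
      have h4 : e₁ - e₂ = 0 := by rw [← hk, show k = 0 from Subtype.ext h3, map_zero]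
      rw [sub_eq_zero] at h4
      exact h4
    let σ : N →ₗ[R] E :=
      { toFun := fun n => (hex n).choose
        map_add' := by
          intro a b
          refine huniq (a + b) _ _ (hex (a+b)).choose_spec ⟨?_, ?_⟩
          · rw [map_add, (hex a).choose_spec.1, (hex b).choose_spec.1]
          · rw [map_add, (hex a).choose_spec.2, (hex b).choose_spec.2, map_add, map_add]
        map_smul' := by
          intro r a
          refine huniq (r • a) _ _ (hex (r • a)).choose_spec ⟨?_, ?_⟩
          · rw [map_smul, (hex a).choose_spec.1]; rfl
          · rw [map_smul, (hex a).choose_spec.2, map_smul, map_smul]; rfl }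
    refine ⟨σ, ?_⟩
    ext n
    have h5 : π ((hex n).choose) = n := (hex n).choose_spec.1
    exact congrArg Subtype.val h5

theorem isPseudoNull_middle_iff {R X Y Z : Type u} [Ring R]
    [AddCommGroup X] [Module R X] [AddCommGroup Y] [Module R Y]
    [AddCommGroup Z] [Module R Z]
    (f : X →ₗ[R] Y) (g : Y →ₗ[R] Z)
    (hf : Function.Injective f) (hg : Function.Surjective g)
    (hfg : LinearMap.range f = LinearMap.ker g) :
    IsPseudoNull R Y ↔ (IsPseudoNull R X ∧ IsPseudoNull R Z) := by
  constructor
  · intro hY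
    exact ⟨hY.of_injective f hf, IsPseudoNull.of_surjective g hg hY⟩
  · rintro ⟨hX, hZ⟩
    exact IsPseudoNull.of_extension f g hf hg hfg hX hZ
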